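/- Consider the parameterized KKT residual map with parameter q₀ ∈ ℝ^k: G(q₀; z, ν, λ) = (P₀z + q₀ + Σ_i ν_i(P_iz + q_i) + Σ_j λ_j(D_jz + h_j); (ν_i·((1/2)zᵀP_iz + q_iᵀz + r_i))_{i}; ((1/2)zᵀD_jz + h_jᵀz + g_j)_{j}). Suppose G(q₀⁰; z*, ν*, λ*) = 0, the KKT differential matrix M at (z*, ν*, λ*) is invertible, φ is a map from a neighborhood U of q₀⁰ to ℝ^k × ℝ^{m_I} × ℝ^{m_E} that is differentiable at q₀⁰, satisfies φ(q₀⁰) = (z*, ν*, λ*), and G(q₀; φ(q₀)) = 0 for all q₀ ∈ U, and ℓ : ℝ^k → ℝ is differentiable at z* with gradient g = ∇ℓ(z*). Then the function q₀ ↦ ℓ(z-component of φ(q₀)) is differentiable at q₀⁰ and its gradient equals d_z, the first block of d = −(Mᵀ)⁻¹·(g, 0, 0). -/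

import Mathlib

open Matrix BigOperators

/-- The KKT differential matrix `M` of the QCQP, evaluated at a primal-dual point
`(z, ν, λ)`: its first block row is `[Q, P_1z+q_1, …, D_1z+h_1, …]` with
`Q = P₀ + Σ_i ν_i P_i + Σ_j λ_j D_j`, its `i`-th inequality row is
`[ν_i (P_iz+q_i)ᵀ, ((1/2)zᵀP_iz + q_iᵀz + r_i)·e_iᵀ, 0]` and its `j`-th equality row is
`[(D_jz+h_j)ᵀ, 0, 0]`. -/
noncomputable def kktMatrix {k mI mE : ℕ}
    (P0 : Matrix (Fin k) (Fin k) ℝ)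
    (P : Fin mI → Matrix (Fin k) (Fin k) ℝ) (q : Fin mI → Fin k → ℝ) (r : Fin mI → ℝ)
    (D : Fin mE → Matrix (Fin k) (Fin k) ℝ) (h : Fin mE → Fin k → ℝ)
    (z : Fin k → ℝ) (ν : Fin mI → ℝ) (lam : Fin mE → ℝ) :
    Matrix (Fin k ⊕ (Fin mI ⊕ Fin mE)) (Fin k ⊕ (Fin mI ⊕ Fin mE)) ℝ :=
  Matrix.fromBlocks
    (P0 + ∑ i, ν i • P i + ∑ j, lam j • D j)
    (Matrix.of fun a ij =>
      Sum.elim (fun i => ((P i).mulVec z + q i) a) (fun j => ((D j).mulVec z + h j) a) ij)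
    (Matrix.of fun ij b =>
      Sum.elim (fun i => ν i * ((P i).mulVec z + q i) b)
        (fun j => ((D j).mulVec z + h j) b) ij)
    (Matrix.of fun ij ij' =>
      Sum.elim
        (fun i => Sum.elim
          (fun i' => if i' = i then (1 / 2) * (z ⬝ᵥ (P i).mulVec z) + q i ⬝ᵥ z + r i else 0)
          (fun _ => 0) ij')
        (fun _ => 0) ij)

/-- The KKT residual map `G(q₀; z, ν, λ)` of the QCQP, parameterized by the linear
objective coefficient `q₀`. -/
noncomputable def kktResidualQ0 {k mI mE : ℕ}
    (P0 : Matrix (Fin k) (Fin k) ℝ)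
    (P : Fin mI → Matrix (Fin k) (Fin k) ℝ) (q : Fin mI → Fin k → ℝ) (r : Fin mI → ℝ)
    (D : Fin mE → Matrix (Fin k) (Fin k) ℝ) (h : Fin mE → Fin k → ℝ) (gE : Fin mE → ℝ)
    (q0 : Fin k → ℝ)
    (p : (Fin k → ℝ) × (Fin mI → ℝ) × (Fin mE → ℝ)) :
    (Fin k ⊕ (Fin mI ⊕ Fin mE)) → ℝ :=
  Sum.elim
    (P0.mulVec p.1 + q0 + ∑ i, p.2.1 i • ((P i).mulVec p.1 + q i)
      + ∑ j, p.2.2 j • ((D j).mulVec p.1 + h j))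
    (Sum.elim
      (fun i => p.2.1 i * ((1 / 2) * (p.1 ⬝ᵥ (P i).mulVec p.1) + q i ⬝ᵥ p.1 + r i))
      (fun j => (1 / 2) * (p.1 ⬝ᵥ (D j).mulVec p.1) + h j ⬝ᵥ p.1 + gE j))



section Helpers

variable {n m : ℕ} {E : Type*} [NormedAddCommGroup E] [NormedSpace ℝ E]
  {f : E → (Fin n → ℝ)} {f' : E →L[ℝ] (Fin n → ℝ)} {x : E}

noncomputable def mvCLM (A : Matrix (Fin m) (Fin n) ℝ) : (Fin n → ℝ) →L[ℝ] (Fin m → ℝ) :=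
  LinearMap.toContinuousLinearMap A.mulVecLin

@[simp] theorem mvCLM_apply (A : Matrix (Fin m) (Fin n) ℝ) (v : Fin n → ℝ) :
    mvCLM A v = A.mulVec v := by simp [mvCLM]

noncomputable def dotCLM (c : Fin n → ℝ) : (Fin n → ℝ) →L[ℝ] ℝ :=
  LinearMap.toContinuousLinearMap
    { toFun := fun v => c ⬝ᵥ v
      map_add' := fun a b => dotProduct_add c a b
      map_smul' := fun t v => by simp [dotProduct_smul] }

@[simp] theorem dotCLM_apply (c v : Fin n → ℝ) : dotCLM c v = c ⬝ᵥ v := by simp [dotCLM]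

theorem hasFDerivAt_mulVec_apply' (A : Matrix (Fin m) (Fin n) ℝ) (b : Fin m)
    (hf : HasFDerivAt f f' x) :
    HasFDerivAt (fun y => A.mulVec (f y) b)
      ((((ContinuousLinearMap.proj b : (Fin m → ℝ) →L[ℝ] ℝ).comp (mvCLM A))).comp f') x := by
  have h := (((ContinuousLinearMap.proj b : (Fin m → ℝ) →L[ℝ] ℝ).comp
    (mvCLM A)).hasFDerivAt (x := f x)).comp x hf
  exact h.congr_of_eventuallyEq (Filter.Eventually.of_forall fun y => by
    simp [Function.comp])

theorem hasFDerivAt_dotc (c : Fin n → ℝ) (hf : HasFDerivAt f f' x) :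
    HasFDerivAt (fun y => c ⬝ᵥ f y) ((dotCLM c).comp f') x := by
  have h := ((dotCLM c).hasFDerivAt (x := f x)).comp x hf
  exact h.congr_of_eventuallyEq (Filter.Eventually.of_forall fun y => by
    simp [Function.comp])

theorem hasFDerivAt_quad (A : Matrix (Fin n) (Fin n) ℝ) (hf : HasFDerivAt f f' x) :
    HasFDerivAt (fun y => f y ⬝ᵥ A.mulVec (f y))
      ((dotCLM (A.mulVec (f x) + Aᵀ.mulVec (f x))).comp f') x := by
  have hb : ∀ b : Fin n, HasFDerivAt (fun y => f y b * A.mulVec (f y) b)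
      (f x b • ((((ContinuousLinearMap.proj b : (Fin n → ℝ) →L[ℝ] ℝ).comp (mvCLM A))).comp f')
        + A.mulVec (f x) b • ((ContinuousLinearMap.proj b : (Fin n → ℝ) →L[ℝ] ℝ).comp f')) x := by
    intro b
    have h1 : HasFDerivAt (fun y => f y b)
        ((ContinuousLinearMap.proj b : (Fin n → ℝ) →L[ℝ] ℝ).comp f') x :=
      ((ContinuousLinearMap.proj b : (Fin n → ℝ) →L[ℝ] ℝ).hasFDerivAt).comp x hf
    exact h1.mul (hasFDerivAt_mulVec_apply' A b hf)
  have h := HasFDerivAt.fun_sum (fun b (_ : b ∈ Finset.univ) => hb b)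
  have h2 := h.congr_of_eventuallyEq (Filter.Eventually.of_forall
    (fun y => by simp [dotProduct] :
      ∀ y, (fun y => f y ⬝ᵥ A.mulVec (f y)) y = (fun y => ∑ b, f y b * A.mulVec (f y) b) y))
  refine h2.congr_fderiv (Eq.symm ?_)
  refine ContinuousLinearMap.ext fun (u : E) => ?_
  simp only [ContinuousLinearMap.coe_sum', Finset.sum_apply, ContinuousLinearMap.add_apply,
    ContinuousLinearMap.coe_smul', Pi.smul_apply, ContinuousLinearMap.coe_comp',
    Function.comp_apply, mvCLM_apply, ContinuousLinearMap.proj_apply, dotCLM_apply,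
    smul_eq_mul]
  have e1 : (f x) ⬝ᵥ A *ᵥ (f' u) = Aᵀ *ᵥ f x ⬝ᵥ f' u := by
    rw [dotProduct_mulVec, mulVec_transpose]
  calc (A *ᵥ f x + Aᵀ *ᵥ f x) ⬝ᵥ f' u
      = A *ᵥ f x ⬝ᵥ f' u + f x ⬝ᵥ A *ᵥ (f' u) := by rw [add_dotProduct, e1]
    _ = ∑ b, (f x b * (A *ᵥ f' u) b + (A *ᵥ f x) b * f' u b) := by
        simp [dotProduct, Finset.sum_add_distrib, mul_comm, add_comm]
  -- done
end Helpers

theorem sum_mulVec' {m n : ℕ} {ι : Type*} (s : Finset ι) (A : ι → Matrix (Fin m) (Fin n) ℝ)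
    (v : Fin n → ℝ) : (∑ i ∈ s, A i) *ᵥ v = ∑ i ∈ s, A i *ᵥ v := by
  funext b
  simp only [Matrix.mulVec, dotProduct, Matrix.sum_apply, Finset.sum_apply, Finset.sum_mul]
  rw [Finset.sum_comm]

theorem kkt_mulVec_inl {k mI mE : ℕ}
    (P0 : Matrix (Fin k) (Fin k) ℝ)
    (P : Fin mI → Matrix (Fin k) (Fin k) ℝ) (q : Fin mI → Fin k → ℝ) (r : Fin mI → ℝ)
    (D : Fin mE → Matrix (Fin k) (Fin k) ℝ) (h : Fin mE → Fin k → ℝ)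
    (zs : Fin k → ℝ) (ν : Fin mI → ℝ) (lam : Fin mE → ℝ)
    (v : Fin k → ℝ) (w2 : Fin mI → ℝ) (w3 : Fin mE → ℝ) (b : Fin k) :
    (kktMatrix P0 P q r D h zs ν lam *ᵥ Sum.elim v (Sum.elim w2 w3)) (Sum.inl b)
      = P0.mulVec v b + ∑ i, ν i * (P i).mulVec v b + ∑ j, lam j * (D j).mulVec v b
        + (∑ i, ((P i).mulVec zs b + q i b) * w2 i
          + ∑ j, ((D j).mulVec zs b + h j b) * w3 j) := by
  rw [kktMatrix, Matrix.fromBlocks_mulVec]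
  simp only [Sum.elim_comp_inl, Sum.elim_comp_inr, Sum.elim_inl, Pi.add_apply,
    Matrix.add_mulVec, sum_mulVec', Matrix.smul_mulVec, Finset.sum_apply,
    Pi.smul_apply, smul_eq_mul]
  congr 1
  simp [Matrix.mulVec, dotProduct, Fintype.sum_sum_type]

theorem kkt_mulVec_inr_inl {k mI mE : ℕ}
    (P0 : Matrix (Fin k) (Fin k) ℝ)
    (P : Fin mI → Matrix (Fin k) (Fin k) ℝ) (q : Fin mI → Fin k → ℝ) (r : Fin mI → ℝ)
    (D : Fin mE → Matrix (Fin k) (Fin k) ℝ) (h : Fin mE → Fin k → ℝ)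
    (zs : Fin k → ℝ) (ν : Fin mI → ℝ) (lam : Fin mE → ℝ)
    (v : Fin k → ℝ) (w2 : Fin mI → ℝ) (w3 : Fin mE → ℝ) (i : Fin mI) :
    (kktMatrix P0 P q r D h zs ν lam *ᵥ Sum.elim v (Sum.elim w2 w3)) (Sum.inr (Sum.inl i))
      = ν i * ((P i).mulVec zs ⬝ᵥ v) + ν i * (q i ⬝ᵥ v)
        + ((1 / 2) * (zs ⬝ᵥ (P i).mulVec zs) + q i ⬝ᵥ zs + r i) * w2 i := by
  rw [kktMatrix, Matrix.fromBlocks_mulVec]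
  simp [Matrix.mulVec, dotProduct, Fintype.sum_sum_type, ite_mul, Finset.mul_sum,
    mul_add, add_mul, Finset.sum_add_distrib, mul_assoc]
  exact Finset.sum_congr rfl fun x _ => by rw [← Finset.mul_sum]; ring

theorem kkt_mulVec_inr_inr {k mI mE : ℕ}
    (P0 : Matrix (Fin k) (Fin k) ℝ)
    (P : Fin mI → Matrix (Fin k) (Fin k) ℝ) (q : Fin mI → Fin k → ℝ) (r : Fin mI → ℝ)
    (D : Fin mE → Matrix (Fin k) (Fin k) ℝ) (h : Fin mE → Fin k → ℝ)
    (zs : Fin k → ℝ) (ν : Fin mI → ℝ) (lam : Fin mE → ℝ)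
    (v : Fin k → ℝ) (w2 : Fin mI → ℝ) (w3 : Fin mE → ℝ) (j : Fin mE) :
    (kktMatrix P0 P q r D h zs ν lam *ᵥ Sum.elim v (Sum.elim w2 w3)) (Sum.inr (Sum.inr j))
      = (D j).mulVec zs ⬝ᵥ v + h j ⬝ᵥ v := by
  rw [kktMatrix, Matrix.fromBlocks_mulVec]
  simp [Matrix.mulVec, dotProduct, Fintype.sum_sum_type, mul_add, add_mul,
    Finset.sum_add_distrib, mul_assoc]

theorem qcqp_loss_gradient_q0 {k mI mE : ℕ}
    (P0 : Matrix (Fin k) (Fin k) ℝ)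
    (P : Fin mI → Matrix (Fin k) (Fin k) ℝ) (q : Fin mI → Fin k → ℝ) (r : Fin mI → ℝ)
    (D : Fin mE → Matrix (Fin k) (Fin k) ℝ) (h : Fin mE → Fin k → ℝ) (gE : Fin mE → ℝ)
    (hP0 : P0.IsSymm) (hP : ∀ i, (P i).IsSymm) (hD : ∀ j, (D j).IsSymm)
    (q00 : Fin k → ℝ) (zs : Fin k → ℝ) (ν : Fin mI → ℝ) (lam : Fin mE → ℝ)
    (hroot : kktResidualQ0 P0 P q r D h gE q00 (zs, ν, lam) = 0)
    (hM : IsUnit (kktMatrix P0 P q r D h zs ν lam))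
    (U : Set (Fin k → ℝ)) (hU : IsOpen U) (hq00 : q00 ∈ U)
    (φ : (Fin k → ℝ) → ((Fin k → ℝ) × (Fin mI → ℝ) × (Fin mE → ℝ)))
    (hφdiff : DifferentiableAt ℝ φ q00)
    (hφ0 : φ q00 = (zs, ν, lam))
    (hφ : ∀ q0 ∈ U, kktResidualQ0 P0 P q r D h gE q0 (φ q0) = 0)
    (ℓ : (Fin k → ℝ) → ℝ) (ℓ' : (Fin k → ℝ) →L[ℝ] ℝ) (g : Fin k → ℝ)
    (hℓ : HasFDerivAt ℓ ℓ' zs) (hg : ∀ u, ℓ' u = g ⬝ᵥ u) :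
    ∃ L : (Fin k → ℝ) →L[ℝ] ℝ,
      HasFDerivAt (fun q0 => ℓ (φ q0).1) L q00 ∧
        ∀ u : Fin k → ℝ,
          L u = ((-(kktMatrix P0 P q r D h zs ν lam)ᵀ⁻¹.mulVec
            (Sum.elim g (0 : (Fin mI ⊕ Fin mE) → ℝ))) ∘ Sum.inl) ⬝ᵥ u := by
  classical
  set M := kktMatrix P0 P q r D h zs ν lam with hMdef
  have hφ'h : HasFDerivAt φ (fderiv ℝ φ q00) q00 := hφdiff.hasFDerivAt
  set φ' : (Fin k → ℝ) →L[ℝ]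
      ((Fin k → ℝ) × (Fin mI → ℝ) × (Fin mE → ℝ)) := fderiv ℝ φ q00 with hφ'def
  have hφ1 := hφ'h.fst
  have hφ2 := hφ'h.snd.fst
  have hφ3 := hφ'h.snd.snd
  have hφ2i : ∀ i, HasFDerivAt (fun q0 => (φ q0).2.1 i)
      ((ContinuousLinearMap.proj i : (Fin mI → ℝ) →L[ℝ] ℝ).comp
        ((ContinuousLinearMap.fst ℝ (Fin mI → ℝ) (Fin mE → ℝ)).comp
          ((ContinuousLinearMap.snd ℝ (Fin k → ℝ) ((Fin mI → ℝ) × (Fin mE → ℝ))).comp φ'))) q00 :=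
    fun i => ((ContinuousLinearMap.proj i : (Fin mI → ℝ) →L[ℝ] ℝ).hasFDerivAt).comp q00 hφ2
  have hφ3j : ∀ j, HasFDerivAt (fun q0 => (φ q0).2.2 j)
      ((ContinuousLinearMap.proj j : (Fin mE → ℝ) →L[ℝ] ℝ).comp
        ((ContinuousLinearMap.snd ℝ (Fin mI → ℝ) (Fin mE → ℝ)).comp
          ((ContinuousLinearMap.snd ℝ (Fin k → ℝ) ((Fin mI → ℝ) × (Fin mE → ℝ))).comp φ'))) q00 :=
    fun j => ((ContinuousLinearMap.proj j : (Fin mE → ℝ) →L[ℝ] ℝ).hasFDerivAt).comp q00 hφ3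
  have hzero : ∀ (f : (Fin k → ℝ) → ℝ), (∀ q0 ∈ U, f q0 = 0) →
      ∀ {f' : (Fin k → ℝ) →L[ℝ] ℝ}, HasFDerivAt f f' q00 → f' = 0 := by
    intro f hf f' hf'
    have he : f =ᶠ[nhds q00] (fun _ => (0 : ℝ)) := by
      filter_upwards [hU.mem_nhds hq00] with y hy using hf y hy
    exact hf'.unique ((hasFDerivAt_const (0 : ℝ) q00).congr_of_eventuallyEq he)
  -- the key linear relation
  have key : ∀ u : Fin k → ℝ,
      M *ᵥ (Sum.elim ((φ' u).1) (Sum.elim ((φ' u).2.1) ((φ' u).2.2)))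
        = -(Sum.elim u 0) := by
    intro u
    funext a
    obtain b | i | j := a
    · -- case inl b
      have hq0b : HasFDerivAt (fun q0 : Fin k → ℝ => q0 b)
          (ContinuousLinearMap.proj b : (Fin k → ℝ) →L[ℝ] ℝ) q00 :=
        (ContinuousLinearMap.proj b : (Fin k → ℝ) →L[ℝ] ℝ).hasFDerivAt
      have hDer := (((hasFDerivAt_mulVec_apply' P0 b hφ1).add hq0b).add
          (HasFDerivAt.sum (fun i (_ : i ∈ Finset.univ) =>
            (hφ2i i).mul ((hasFDerivAt_mulVec_apply' (P i) b hφ1).add_const (q i b))))).add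
          (HasFDerivAt.sum (fun j (_ : j ∈ Finset.univ) =>
            (hφ3j j).mul ((hasFDerivAt_mulVec_apply' (D j) b hφ1).add_const (h j b))))
      have hDk := hDer.congr_of_eventuallyEq (Filter.Eventually.of_forall
        (fun y => by simp [kktResidualQ0, Function.comp, mul_add] :
          ∀ y, (fun q0 => kktResidualQ0 P0 P q r D h gE q0 (φ q0) (Sum.inl b)) y = _))
      have h0 := hzero _ (fun y hy => congrFun (hφ y hy) (Sum.inl b)) hDk
      have hu := DFunLike.congr_fun h0 u
      simp only [ContinuousLinearMap.add_apply, ContinuousLinearMap.coe_comp',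
        Function.comp_apply, ContinuousLinearMap.proj_apply, mvCLM_apply,
        ContinuousLinearMap.coe_sum', Finset.sum_apply, ContinuousLinearMap.coe_smul',
        Pi.smul_apply, smul_eq_mul, ContinuousLinearMap.zero_apply,
        ContinuousLinearMap.coe_fst', ContinuousLinearMap.coe_snd', hφ0] at hu
      rw [kkt_mulVec_inl]
      simp only [Finset.sum_add_distrib] at hu
      simp only [Pi.neg_apply, Sum.elim_inl]
      linarith
    · -- case inr inl i
      have hDer := (hφ2i i).mul ((((hasFDerivAt_quad (P i) hφ1).const_mul ((1:ℝ)/2)).add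
        (hasFDerivAt_dotc (q i) hφ1)).add_const (r i))
      have hDk := hDer.congr_of_eventuallyEq (Filter.Eventually.of_forall
        (fun y => by simp [kktResidualQ0, Function.comp] :
          ∀ y, (fun q0 => kktResidualQ0 P0 P q r D h gE q0 (φ q0) (Sum.inr (Sum.inl i))) y = _))
      have h0 := hzero _ (fun y hy => congrFun (hφ y hy) (Sum.inr (Sum.inl i))) hDk
      have hu := DFunLike.congr_fun h0 u
      simp only [ContinuousLinearMap.add_apply, ContinuousLinearMap.coe_comp',
        Function.comp_apply, ContinuousLinearMap.proj_apply, mvCLM_apply, dotCLM_apply,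
        ContinuousLinearMap.coe_sum', Finset.sum_apply, ContinuousLinearMap.coe_smul',
        Pi.smul_apply, smul_eq_mul, ContinuousLinearMap.zero_apply,
        ContinuousLinearMap.coe_fst', ContinuousLinearMap.coe_snd', hφ0, (hP i).eq, Pi.add_apply] at hu
      rw [kkt_mulVec_inr_inl]
      simp only [Pi.neg_apply, Sum.elim_inr, Sum.elim_inl, Pi.zero_apply, neg_zero]
      simp only [add_dotProduct] at hu
      linear_combination hu
    · -- case inr inr j
      have hDer := (((hasFDerivAt_quad (D j) hφ1).const_mul ((1:ℝ)/2)).add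
        (hasFDerivAt_dotc (h j) hφ1)).add_const (gE j)
      have hDk := hDer.congr_of_eventuallyEq (Filter.Eventually.of_forall
        (fun y => by simp [kktResidualQ0, Function.comp] :
          ∀ y, (fun q0 => kktResidualQ0 P0 P q r D h gE q0 (φ q0) (Sum.inr (Sum.inr j))) y = _))
      have h0 := hzero _ (fun y hy => congrFun (hφ y hy) (Sum.inr (Sum.inr j))) hDk
      have hu := DFunLike.congr_fun h0 u
      simp only [ContinuousLinearMap.add_apply, ContinuousLinearMap.coe_comp',
        Function.comp_apply, ContinuousLinearMap.proj_apply, mvCLM_apply, dotCLM_apply,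
        ContinuousLinearMap.coe_sum', Finset.sum_apply, ContinuousLinearMap.coe_smul',
        Pi.smul_apply, smul_eq_mul, ContinuousLinearMap.zero_apply,
        ContinuousLinearMap.coe_fst', ContinuousLinearMap.coe_snd', hφ0, (hD j).eq] at hu
      rw [kkt_mulVec_inr_inr]
      simp only [Pi.neg_apply, Sum.elim_inr, Pi.zero_apply, neg_zero]
      simp only [add_dotProduct] at hu
      linear_combination hu
  -- invert the relation
  have hdet : IsUnit M.det := (Matrix.isUnit_iff_isUnit_det M).mp hM
  have hψ : ∀ u : Fin k → ℝ,
      Sum.elim ((φ' u).1) (Sum.elim ((φ' u).2.1) ((φ' u).2.2))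
        = -(M⁻¹ *ᵥ Sum.elim u 0) := by
    intro u
    have h1 := congrArg (fun w => M⁻¹ *ᵥ w) (key u)
    simpa [Matrix.mulVec_mulVec, Matrix.nonsing_inv_mul M hdet, Matrix.mulVec_neg,
      Matrix.one_mulVec] using h1
  refine ⟨ℓ'.comp ((ContinuousLinearMap.fst ℝ (Fin k → ℝ)
      ((Fin mI → ℝ) × (Fin mE → ℝ))).comp φ'), ?_, ?_⟩
  · have h1 : HasFDerivAt ℓ ℓ' ((φ q00).1) := by rw [hφ0]; exact hℓ
    exact h1.comp q00 hφ1
  · intro u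
    have hv1 : (φ' u).1 = (-(M⁻¹ *ᵥ Sum.elim u 0)) ∘ Sum.inl := by
      have h2 := congrArg (fun w => w ∘ Sum.inl) (hψ u)
      simpa using h2
    have e2 : Sum.elim g (0 : (Fin mI ⊕ Fin mE) → ℝ) ⬝ᵥ (M⁻¹ *ᵥ Sum.elim u 0)
        = (M⁻¹ᵀ *ᵥ Sum.elim g 0) ⬝ᵥ Sum.elim u 0 := by
      rw [dotProduct_mulVec, mulVec_transpose]
    have e3 : Sum.elim g (0 : (Fin mI ⊕ Fin mE) → ℝ) ⬝ᵥ (M⁻¹ *ᵥ Sum.elim u 0)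
        = ∑ b, g b * (M⁻¹ *ᵥ Sum.elim u 0) (Sum.inl b) := by
      simp [dotProduct, Fintype.sum_sum_type]
    have e4 : (M⁻¹ᵀ *ᵥ Sum.elim g (0 : (Fin mI ⊕ Fin mE) → ℝ)) ⬝ᵥ Sum.elim u 0
        = ∑ b, (M⁻¹ᵀ *ᵥ Sum.elim g 0) (Sum.inl b) * u b := by
      simp [dotProduct, Fintype.sum_sum_type]
    have e5 : (∑ b, g b * (M⁻¹ *ᵥ Sum.elim u 0) (Sum.inl b))
        = ∑ b, (M⁻¹ᵀ *ᵥ Sum.elim g (0 : (Fin mI ⊕ Fin mE) → ℝ)) (Sum.inl b) * u b := by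
      rw [← e3, e2, e4]
    rw [← Matrix.transpose_nonsing_inv]
    simp only [ContinuousLinearMap.coe_comp', Function.comp_apply,
      ContinuousLinearMap.coe_fst', hg]
    rw [hv1]
    simp only [dotProduct, Function.comp_apply, Pi.neg_apply, mul_neg, neg_mul]
    rw [Finset.sum_neg_distrib, Finset.sum_neg_distrib]
    exact congrArg Neg.neg e5
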